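/- arXiv:2402.00674 — 2 statements merged into one kernel-verified Lean document; each statement's English description precedes it below -/
import Mathlib

section
/- Let N be a positive integer, C* > 0, a > 1, and for each i = 1,…,N let b_i > 0 and c_i ∈ ℝ with c_i < a·b_i. Let T > 0 and let Z : [0,T] → [0,∞) be absolutely continuous with Z(0) = Z₀. Suppose that for almost every t ∈ [0,T], Z'(t) ≤ C*·(1+t)^{−a}·e^{C*·t/(1+t)}·Z(t)² + C*·Σ_{i=1}^N (1+t)^{c_i − 1 − a·b_i}·e^{C*·b_i·t/(1+t)}·Z(t)^{b_i+1}, and that Z(t) ≤ 2·Z₀ for all t ∈ [0,T]. Then for every t ∈ [0,T], Z(t) ≤ ( 1 + (4·C*·e^{C*}/(a−1))·Z₀ + Σ_{i=1}^N (2^{b_i+1}·C*·e^{C*·b_i}/(a·b_i − c_i))·Z₀^{b_i} )·Z₀. -/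
open MeasureTheory intervalIntegral

lemma aux_integrable (p t : ℝ) (ht : 0 ≤ t) :
    IntervalIntegrable (fun τ => (1+τ) ^ p) volume 0 t := by
  apply ContinuousOn.intervalIntegrable
  apply ContinuousOn.rpow_const (continuous_const.add continuous_id).continuousOn
  intro x hx
  left
  rw [Set.uIcc_of_le ht] at hx
  have := hx.1
  intro h
  simp only [Pi.add_apply, id] at h
  linarith

lemma aux_int (p t : ℝ) (ht : 0 ≤ t) (hp : p < -1) :
    (∫ τ in (0:ℝ)..t, (1+τ) ^ p) ≤ 1 / (-(p+1)) := by
  have hstep : (∫ τ in (0:ℝ)..t, (1+τ)^p) = ∫ x in (1:ℝ)..(1+t), x ^ p := by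
    have := intervalIntegral.integral_comp_add_left (a := 0) (b := t)
      (fun x : ℝ => x ^ p) 1
    simpa using this
  rw [hstep, integral_rpow (Or.inr ⟨by linarith, by
    rw [Set.uIcc_of_le (by linarith)]
    intro h
    exact absurd h.1 (by norm_num)⟩)]
  rw [Real.one_rpow]
  have h2 : (0:ℝ) ≤ (1+t) ^ (p+1) := Real.rpow_nonneg (by linarith) _
  have hpos : (0:ℝ) < -(p+1) := by linarith
  have heq : ((1+t)^(p+1) - 1)/(p+1) = (1 - (1+t)^(p+1))/(-(p+1)) := by
    rw [div_neg, ← neg_div, neg_sub]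
  rw [heq]
  gcongr
  linarith

set_option maxHeartbeats 1000000

/-- The integrated bootstrap estimate in the proof of the Grönwall-type lemma
(display (2.9) in the paper). If `Z : [0,T] → [0,∞)` is absolutely continuous with
a.e. derivative `Z'` satisfying
`Z'(t) ≤ C*·(1+t)^{-a}·e^{C*·t/(1+t)}·Z(t)² + C*·Σᵢ (1+t)^{cᵢ-1-a·bᵢ}·e^{C*·bᵢ·t/(1+t)}·Z(t)^{bᵢ+1}`
for a.e. `t ∈ [0,T]`, and if `Z(t) ≤ 2·Z₀` on `[0,T]` where `Z₀ = Z(0)`, then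
`Z(t) ≤ (1 + (4C*e^{C*}/(a-1))·Z₀ + Σᵢ (2^{bᵢ+1}C*e^{C*bᵢ}/(a·bᵢ-cᵢ))·Z₀^{bᵢ})·Z₀`
for every `t ∈ [0,T]`. -/
theorem bootstrap_integrated_estimate
    (N : ℕ) (hN : 0 < N) (Cs : ℝ) (hCs : 0 < Cs) (a : ℝ) (ha : 1 < a)
    (b c : Fin N → ℝ) (hb : ∀ i, 0 < b i) (hc : ∀ i, c i < a * b i)
    (T : ℝ) (hT : 0 < T) (Z Z' : ℝ → ℝ) (Z₀ : ℝ) (hZ₀ : Z 0 = Z₀)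
    (hpos : ∀ t ∈ Set.Icc (0:ℝ) T, 0 ≤ Z t)
    (hint : ∀ s t : ℝ, 0 ≤ s → s ≤ t → t ≤ T → IntervalIntegrable Z' volume s t)
    (hftc : ∀ s t : ℝ, 0 ≤ s → s ≤ t → t ≤ T → Z t - Z s = ∫ τ in s..t, Z' τ)
    (hderiv : ∀ᵐ t : ℝ ∂volume, t ∈ Set.Icc (0:ℝ) T → HasDerivAt Z (Z' t) t)
    (hineq : ∀ᵐ t : ℝ ∂volume, t ∈ Set.Icc (0:ℝ) T →
      Z' t ≤ Cs * (1 + t) ^ (-a) * Real.exp (Cs * t / (1 + t)) * Z t ^ 2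
        + Cs * ∑ i, (1 + t) ^ (c i - 1 - a * b i) *
            Real.exp (Cs * b i * t / (1 + t)) * Z t ^ (b i + 1))
    (hboot : ∀ t ∈ Set.Icc (0:ℝ) T, Z t ≤ 2 * Z₀) :
    ∀ t ∈ Set.Icc (0:ℝ) T,
      Z t ≤ (1 + (4 * Cs * Real.exp Cs / (a - 1)) * Z₀
        + ∑ i, ((2:ℝ) ^ (b i + 1) * Cs * Real.exp (Cs * b i) / (a * b i - c i))
            * Z₀ ^ (b i)) * Z₀ := by
  intro t ht
  obtain ⟨ht0, htT⟩ := ht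
  have hZ₀0 : 0 ≤ Z₀ := hZ₀ ▸ hpos 0 ⟨le_refl 0, le_of_lt hT⟩
  set g : ℝ → ℝ := fun τ => 4 * Cs * Real.exp Cs * Z₀^2 * (1+τ)^(-a)
    + Cs * ∑ i, (2:ℝ) ^ (b i + 1) * Real.exp (Cs * b i) * Z₀ ^ (b i + 1)
      * (1+τ)^(c i - 1 - a * b i) with hg
  have hsumint : IntervalIntegrable (fun τ => ∑ i, (2:ℝ) ^ (b i + 1)
      * Real.exp (Cs * b i) * Z₀ ^ (b i + 1) * (1+τ)^(c i - 1 - a * b i))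
      volume 0 t := by
    have heq : (fun τ => ∑ i, (2:ℝ) ^ (b i + 1)
        * Real.exp (Cs * b i) * Z₀ ^ (b i + 1) * (1+τ)^(c i - 1 - a * b i))
        = ∑ i, (fun τ => (2:ℝ) ^ (b i + 1)
        * Real.exp (Cs * b i) * Z₀ ^ (b i + 1) * (1+τ)^(c i - 1 - a * b i)) := by
      ext τ
      simp [Finset.sum_apply]
    rw [heq]
    exact IntervalIntegrable.sum _ (fun i _ => (aux_integrable _ t ht0).const_mul _)
  have hgint : IntervalIntegrable g volume 0 t := by
    rw [hg]
    exact ((aux_integrable (-a) t ht0).const_mul _).add (hsumint.const_mul _)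
  have hle : ∀ᵐ τ ∂(volume.restrict (Set.Icc (0:ℝ) t)), Z' τ ≤ g τ := by
    rw [ae_restrict_iff' measurableSet_Icc]
    filter_upwards [hineq] with τ h hτ
    have hτT : τ ∈ Set.Icc (0:ℝ) T := ⟨hτ.1, le_trans hτ.2 htT⟩
    have h1τ : (0:ℝ) < 1 + τ := by linarith [hτ.1]
    have hZτ : 0 ≤ Z τ := hpos τ hτT
    have hZ2 : Z τ ≤ 2 * Z₀ := hboot τ hτT
    have hfrac : τ / (1 + τ) ≤ 1 := by
      rw [div_le_one h1τ]; linarith [hτ.1]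
    have hfrac0 : 0 ≤ τ / (1 + τ) := div_nonneg hτ.1 (le_of_lt h1τ)
    refine le_trans (h hτT) ?_
    rw [hg]
    apply add_le_add
    · have hx : (0:ℝ) ≤ (1+τ)^(-a) := Real.rpow_nonneg (le_of_lt h1τ) _
      have e1 : Real.exp (Cs * τ / (1+τ)) ≤ Real.exp Cs := by
        apply Real.exp_le_exp.mpr
        rw [mul_div_assoc]
        nlinarith
      have hzz : Z τ ^ 2 ≤ 4 * Z₀ ^ 2 := by nlinarith
      calc Cs * (1+τ)^(-a) * Real.exp (Cs*τ/(1+τ)) * Z τ ^ 2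
          ≤ Cs * (1+τ)^(-a) * Real.exp Cs * (4 * Z₀^2) := by
            gcongr <;> first
              | exact e1
              | exact hzz
              | positivity
              | nlinarith [Real.exp_pos (Cs*τ/(1+τ))]
        _ = 4 * Cs * Real.exp Cs * Z₀^2 * (1+τ)^(-a) := by ring
    · apply mul_le_mul_of_nonneg_left _ (le_of_lt hCs)
      apply Finset.sum_le_sum
      intro i hi
      have hx : (0:ℝ) ≤ (1+τ)^(c i - 1 - a * b i) :=
        Real.rpow_nonneg (le_of_lt h1τ) _
      have e1 : Real.exp (Cs * b i * τ / (1+τ)) ≤ Real.exp (Cs * b i) := by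
        apply Real.exp_le_exp.mpr
        rw [mul_div_assoc]
        nlinarith [mul_le_mul_of_nonneg_left hfrac (le_of_lt (mul_pos hCs (hb i)))]
      have hz : Z τ ^ (b i + 1) ≤ (2 * Z₀) ^ (b i + 1) :=
        Real.rpow_le_rpow hZτ hZ2 (by linarith [hb i])
      have h2z : ((2:ℝ) * Z₀) ^ (b i + 1) = 2 ^ (b i + 1) * Z₀ ^ (b i + 1) :=
        Real.mul_rpow (by norm_num) hZ₀0
      calc (1+τ)^(c i - 1 - a*b i) * Real.exp (Cs * b i * τ/(1+τ)) * Z τ ^ (b i + 1)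
          ≤ (1+τ)^(c i - 1 - a*b i) * Real.exp (Cs * b i) * ((2*Z₀) ^ (b i + 1)) := by
            gcongr <;> first
              | exact e1
              | exact hz
              | positivity
              | exact le_of_lt (Real.exp_pos _)
        _ = 2 ^ (b i + 1) * Real.exp (Cs * b i) * Z₀ ^ (b i + 1)
              * (1+τ)^(c i - 1 - a*b i) := by rw [h2z]; ring
  have key : Z t - Z₀ ≤ ∫ τ in (0:ℝ)..t, g τ := by
    rw [← hZ₀, hftc 0 t le_rfl ht0 htT]
    exact intervalIntegral.integral_mono_ae_restrict ht0
      (hint 0 t le_rfl ht0 htT) hgint hle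
  have hgval : (∫ τ in (0:ℝ)..t, g τ)
      ≤ 4 * Cs * Real.exp Cs * Z₀^2 * (1/(a-1))
        + Cs * ∑ i, (2:ℝ) ^ (b i + 1) * Real.exp (Cs * b i) * Z₀ ^ (b i + 1)
          * (1/(a * b i - c i)) := by
    rw [hg]
    rw [intervalIntegral.integral_add ((aux_integrable (-a) t ht0).const_mul _)
      (hsumint.const_mul _)]
    apply add_le_add
    · rw [intervalIntegral.integral_const_mul]
      have haux := aux_int (-a) t ht0 (by linarith)
      have h2 : -(-a + 1) = a - 1 := by ring
      rw [h2] at haux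
      exact mul_le_mul_of_nonneg_left haux (by positivity)
    · rw [intervalIntegral.integral_const_mul,
        intervalIntegral.integral_finset_sum
          (fun i _ => (aux_integrable _ t ht0).const_mul _)]
      apply mul_le_mul_of_nonneg_left _ (le_of_lt hCs)
      apply Finset.sum_le_sum
      intro i hi
      rw [intervalIntegral.integral_const_mul]
      have haux := aux_int (c i - 1 - a * b i) t ht0 (by nlinarith [hc i])
      have h2 : -((c i - 1 - a * b i) + 1) = a * b i - c i := by ring
      rw [h2] at haux
      exact mul_le_mul_of_nonneg_left haux (by positivity)
  have hfin : ∀ i : Fin N, Z₀ ^ (b i + 1) = Z₀ ^ (b i) * Z₀ := by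
    intro i
    rw [Real.rpow_add' hZ₀0 (by linarith [hb i]), Real.rpow_one]
  have hrhs : (1 + (4 * Cs * Real.exp Cs / (a - 1)) * Z₀
        + ∑ i, ((2:ℝ) ^ (b i + 1) * Cs * Real.exp (Cs * b i) / (a * b i - c i))
            * Z₀ ^ (b i)) * Z₀
      = Z₀ + 4 * Cs * Real.exp Cs * Z₀^2 * (1/(a-1))
        + Cs * ∑ i, (2:ℝ) ^ (b i + 1) * Real.exp (Cs * b i) * Z₀ ^ (b i + 1)
          * (1/(a * b i - c i)) := by
    rw [add_mul, add_mul, Finset.sum_mul, Finset.mul_sum]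
    congr 1
    · ring
    · apply Finset.sum_congr rfl
      intro i _
      rw [hfin i]
      ring
  rw [hrhs]
  linarith
end

section
/- Let d ≥ 1 be an integer, T > 0, γ̃ ∈ ℝ, and M ≥ 0. Let n : [0,T] × ℝ^d → ℝ be continuously differentiable with n(t,x) = 0 whenever x lies outside a fixed compact set 𝒦 ⊂ ℝ^d, let w, v : [0,T] × ℝ^d → ℝ^d be continuously differentiable vector fields such that sup_x |∇_x·w(t,x)| < ∞ for each t, and let κ : [0,T] × ℝ^d → ℝ be measurable with |κ(t,x)| ≤ M for all (t,x). Assume that ∂_t n + (w+v)·∇_x n + γ̃·n·∇_x·(w+v) = 0 on [0,T] × ℝ^d, and that ∇_x·v(t,x) = d/(1+t) + κ(t,x)/(1+t)² for all (t,x). Then E(t) := ∫_{ℝ^d} n(t,x)² dx is differentiable in t, and for all t ∈ [0,T], (1/2)·E'(t) + ( d·(γ̃ − 1/2)/(1+t) )·E(t) ≤ |γ̃ − 1/2|·( sup_x |∇_x·w(t,x)| + M/(1+t)² )·E(t). -/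
open MeasureTheory

/-- The (spatial) divergence of a vector field on `ℝ^d`. -/
noncomputable def divg {d : ℕ}
    (f : EuclideanSpace ℝ (Fin d) → EuclideanSpace ℝ (Fin d))
    (x : EuclideanSpace ℝ (Fin d)) : ℝ :=
  ∑ i, fderiv ℝ f x (EuclideanSpace.single i 1) i

lemma euclid_sum_single {d : ℕ} (y : EuclideanSpace ℝ (Fin d)) :
    ∑ i, y i • EuclideanSpace.single i (1:ℝ) = y := by
  have := (EuclideanSpace.basisFun (Fin d) ℝ).sum_repr y
  simpa [EuclideanSpace.basisFun_apply, EuclideanSpace.basisFun_repr] using this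

lemma slice_contDiff {d : ℕ} {T : ℝ} {G : Type*} [NormedAddCommGroup G] [NormedSpace ℝ G]
    {f : ℝ × EuclideanSpace ℝ (Fin d) → G}
    (hf : ContDiffOn ℝ 1 f (Set.Icc 0 T ×ˢ Set.univ)) {t : ℝ} (ht : t ∈ Set.Icc (0:ℝ) T) :
    ContDiff ℝ 1 (fun x => f (t, x)) := by
  rw [← contDiffOn_univ]
  exact hf.comp (contDiff_const.prodMk contDiff_id).contDiffOn (fun x _ => ⟨ht, trivial⟩)

lemma slice_fderiv {d : ℕ} {T : ℝ} {G : Type*} [NormedAddCommGroup G] [NormedSpace ℝ G]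
    {f : ℝ × EuclideanSpace ℝ (Fin d) → G}
    (hf : ContDiffOn ℝ 1 f (Set.Icc 0 T ×ˢ Set.univ)) {t : ℝ} (ht : t ∈ Set.Icc (0:ℝ) T)
    (x : EuclideanSpace ℝ (Fin d)) :
    fderiv ℝ (fun y => f (t, y)) x =
      (fderivWithin ℝ f (Set.Icc 0 T ×ˢ Set.univ) (t, x)).comp
        (ContinuousLinearMap.inr ℝ ℝ (EuclideanSpace ℝ (Fin d))) := by
  have h1 : HasFDerivWithinAt f (fderivWithin ℝ f (Set.Icc 0 T ×ˢ Set.univ) (t, x))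
      (Set.Icc 0 T ×ˢ Set.univ) (t, x) :=
    ((hf.differentiableOn one_ne_zero) (t, x) ⟨ht, trivial⟩).hasFDerivWithinAt
  have h2 : HasFDerivAt (fun y : EuclideanSpace ℝ (Fin d) => ((t, y) : ℝ × _))
      (ContinuousLinearMap.inr ℝ ℝ (EuclideanSpace ℝ (Fin d))) x :=
    hasFDerivAt_prodMk_right t x
  have h3 := h1.comp x (h2.hasFDerivWithinAt (s := Set.univ)) (fun y _ => ⟨ht, trivial⟩)
  rw [hasFDerivWithinAt_univ] at h3
  exact h3.fderiv


set_option maxHeartbeats 1000000 in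
/-- `L²` decay differential inequality for the sound speed variable `n`:
if `∂ₜ n + (w+v)·∇ₓn + γ̃ n ∇ₓ·(w+v) = 0` on `[0,T] × ℝ^d`, with `n` compactly
supported in space, `∇ₓ·w` bounded in `x`, and `∇ₓ·v = d/(1+t) + κ/(1+t)²` with
`|κ| ≤ M`, then `E(t) := ∫ n(t,x)² dx` is differentiable and
`(1/2)E'(t) + (d(γ̃-1/2)/(1+t))E(t)
  ≤ |γ̃-1/2|(sup_x |∇ₓ·w(t,x)| + M/(1+t)²)E(t)` on `[0,T]`. -/
theorem sound_speed_L2_decay_inequality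
    (d : ℕ) (hd : 1 ≤ d) (T : ℝ) (hT : 0 < T) (γ' : ℝ) (M : ℝ) (hM : 0 ≤ M)
    (n : ℝ → EuclideanSpace ℝ (Fin d) → ℝ)
    (w v : ℝ → EuclideanSpace ℝ (Fin d) → EuclideanSpace ℝ (Fin d))
    (κ : ℝ → EuclideanSpace ℝ (Fin d) → ℝ)
    (hn : ContDiffOn ℝ 1 (fun p : ℝ × EuclideanSpace ℝ (Fin d) => n p.1 p.2)
      (Set.Icc 0 T ×ˢ Set.univ))
    (𝒦 : Set (EuclideanSpace ℝ (Fin d))) (h𝒦 : IsCompact 𝒦)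
    (hsupp : ∀ t ∈ Set.Icc (0:ℝ) T, ∀ x ∉ 𝒦, n t x = 0)
    (hw : ContDiffOn ℝ 1 (fun p : ℝ × EuclideanSpace ℝ (Fin d) => w p.1 p.2)
      (Set.Icc 0 T ×ˢ Set.univ))
    (hv : ContDiffOn ℝ 1 (fun p : ℝ × EuclideanSpace ℝ (Fin d) => v p.1 p.2)
      (Set.Icc 0 T ×ˢ Set.univ))
    (hwbdd : ∀ t ∈ Set.Icc (0:ℝ) T,
      BddAbove (Set.range fun x => |divg (w t) x|))
    (hκmeas : Measurable (fun p : ℝ × EuclideanSpace ℝ (Fin d) => κ p.1 p.2))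
    (hκbdd : ∀ t x, |κ t x| ≤ M)
    (hpde : ∀ t ∈ Set.Icc (0:ℝ) T, ∀ x,
      HasDerivWithinAt (fun s => n s x)
        (-(fderiv ℝ (n t) x (w t x + v t x)
            + γ' * n t x * divg (fun y => w t y + v t y) x))
        (Set.Icc 0 T) t)
    (hdivv : ∀ t ∈ Set.Icc (0:ℝ) T, ∀ x,
      divg (v t) x = (d : ℝ) / (1 + t) + κ t x / (1 + t) ^ 2) :
    ∃ E' : ℝ → ℝ,
      (∀ t ∈ Set.Icc (0:ℝ) T,
        HasDerivWithinAt (fun s => ∫ x, (n s x) ^ 2) (E' t) (Set.Icc 0 T) t) ∧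
      ∀ t ∈ Set.Icc (0:ℝ) T,
        (1/2) * E' t + ((d : ℝ) * (γ' - 1/2) / (1 + t)) * ∫ x, (n t x) ^ 2 ≤
          |γ' - 1/2| * ((⨆ x, |divg (w t) x|) + M / (1 + t) ^ 2)
            * ∫ x, (n t x) ^ 2 := by
  classical
  set S : Set (ℝ × EuclideanSpace ℝ (Fin d)) := Set.Icc 0 T ×ˢ Set.univ with hSdef
  have hSud : UniqueDiffOn ℝ S := (uniqueDiffOn_Icc hT).prod uniqueDiffOn_univ
  set A : ℝ → EuclideanSpace ℝ (Fin d) → ℝ := fun t x =>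
    -(fderiv ℝ (n t) x (w t x + v t x)
      + γ' * n t x * divg (fun y => w t y + v t y) x) with hA
  -- slice regularity
  have hntc : ∀ t ∈ Set.Icc (0:ℝ) T, ContDiff ℝ 1 (n t) := fun t ht => slice_contDiff hn ht
  have hwtc : ∀ t ∈ Set.Icc (0:ℝ) T, ContDiff ℝ 1 (w t) := fun t ht => slice_contDiff hw ht
  have hvtc : ∀ t ∈ Set.Icc (0:ℝ) T, ContDiff ℝ 1 (v t) := fun t ht => slice_contDiff hv ht
  -- joint continuity of the time-derivative expression
  set Dn := fderivWithin ℝ (fun p : ℝ × EuclideanSpace ℝ (Fin d) => n p.1 p.2) S with hDn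
  set Dw := fderivWithin ℝ (fun p : ℝ × EuclideanSpace ℝ (Fin d) => w p.1 p.2) S with hDw
  set Dv := fderivWithin ℝ (fun p : ℝ × EuclideanSpace ℝ (Fin d) => v p.1 p.2) S with hDv
  set Φ : ℝ × EuclideanSpace ℝ (Fin d) → ℝ := fun p =>
    2 * n p.1 p.2 *
      (-(Dn p ((0:ℝ), w p.1 p.2 + v p.1 p.2)
        + γ' * n p.1 p.2 * ∑ i, ((Dw p ((0:ℝ), EuclideanSpace.single i 1)) i
            + (Dv p ((0:ℝ), EuclideanSpace.single i 1)) i))) with hΦ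
  have hΦc : ContinuousOn Φ S := by
    have hNc : ContinuousOn (fun p : ℝ × EuclideanSpace ℝ (Fin d) => n p.1 p.2) S :=
      hn.continuousOn
    have hDnc : ContinuousOn Dn S := hn.continuousOn_fderivWithin hSud le_rfl
    have hDwc : ContinuousOn Dw S := hw.continuousOn_fderivWithin hSud le_rfl
    have hDvc : ContinuousOn Dv S := hv.continuousOn_fderivWithin hSud le_rfl
    refine (continuousOn_const.mul hNc).mul (ContinuousOn.neg ?_)
    refine ContinuousOn.add ?_ ?_
    · exact hDnc.clm_apply (continuousOn_const.prodMk (hw.continuousOn.add hv.continuousOn))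
    · refine (continuousOn_const.mul hNc).mul ?_
      refine continuousOn_finset_sum _ (fun i _ => ContinuousOn.add ?_ ?_)
      · exact (EuclideanSpace.proj i).continuous.comp_continuousOn
          (hDwc.clm_apply continuousOn_const)
      · exact (EuclideanSpace.proj i).continuous.comp_continuousOn
          (hDvc.clm_apply continuousOn_const)
  -- Φ agrees with the real derivative expression
  have hΦeq : ∀ t ∈ Set.Icc (0:ℝ) T, ∀ x, 2 * n t x * A t x = Φ (t, x) := by
    intro t ht x
    have h1 : fderiv ℝ (n t) x (w t x + v t x) = Dn (t, x) ((0:ℝ), w t x + v t x) := by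
      rw [hDn, show (n t : EuclideanSpace ℝ (Fin d) → ℝ) = fun y => n t y from rfl,
        slice_fderiv hn ht x]
      rfl
    have h2 : divg (fun y => w t y + v t y) x
        = ∑ i, ((Dw (t, x) ((0:ℝ), EuclideanSpace.single i 1)) i
            + (Dv (t, x) ((0:ℝ), EuclideanSpace.single i 1)) i) := by
      unfold divg
      refine Finset.sum_congr rfl (fun i _ => ?_)
      have hadd : fderiv ℝ (fun y => w t y + v t y) x
          = fderiv ℝ (w t) x + fderiv ℝ (v t) x :=
        fderiv_fun_add ((hwtc t ht).differentiable one_ne_zero x)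
          ((hvtc t ht).differentiable one_ne_zero x)
      rw [hadd]
      have hww : fderiv ℝ (w t) x = (Dw (t,x)).comp
          (ContinuousLinearMap.inr ℝ ℝ (EuclideanSpace ℝ (Fin d))) := by
        rw [hDw, show (w t : _) = fun y => w t y from rfl, slice_fderiv hw ht x]
      have hvv : fderiv ℝ (v t) x = (Dv (t,x)).comp
          (ContinuousLinearMap.inr ℝ ℝ (EuclideanSpace ℝ (Fin d))) := by
        rw [hDv, show (v t : _) = fun y => v t y from rfl, slice_fderiv hv ht x]
      rw [ContinuousLinearMap.add_apply, hww, hvv]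
      rfl
    rw [hA]
    simp only [h1, h2]
    rfl
  -- uniform bound of the derivative expression on Icc × 𝒦
  obtain ⟨C₀, hC₀⟩ := (isCompact_Icc.prod h𝒦).exists_bound_of_continuousOn
    (hΦc.mono (Set.prod_mono_right (Set.subset_univ 𝒦)))
  set C : ℝ := max C₀ 0 with hCdef
  have hC0 : (0:ℝ) ≤ C := le_max_right _ _
  have hC : ∀ t ∈ Set.Icc (0:ℝ) T, ∀ x ∈ 𝒦, |2 * n t x * A t x| ≤ C := by
    intro t ht x hx
    rw [hΦeq t ht x, ← Real.norm_eq_abs]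
    exact (hC₀ (t, x) ⟨ht, hx⟩).trans (le_max_left _ _)
  -- integrability of x ↦ n t x ^ 2
  have hint_sq : ∀ t ∈ Set.Icc (0:ℝ) T, Integrable (fun x => n t x ^ 2) := by
    intro t ht
    refine (((hntc t ht).continuous).pow 2).integrable_of_hasCompactSupport ?_
    exact HasCompactSupport.intro h𝒦 (fun x hx => by simp [hsupp t ht x hx])
  -- the square has the expected time derivative
  have hsqder : ∀ t ∈ Set.Icc (0:ℝ) T, ∀ x,
      HasDerivWithinAt (fun s => n s x ^ 2) (2 * n t x * A t x) (Set.Icc 0 T) t := by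
    intro t ht x
    have h := (hpde t ht x).pow 2
    have hf : (fun s => n s x ^ 2) = (fun s => n s x) ^ 2 := rfl
    rw [hf]
    refine h.congr_deriv ?_
    push_cast
    rw [hA]
    ring
  refine ⟨fun t => ∫ x, 2 * n t x * A t x, ?_, ?_⟩
  · -- differentiability of E
    intro t ht
    rw [hasDerivWithinAt_iff_tendsto_slope]
    have key := tendsto_integral_filter_of_dominated_convergence (μ := volume)
      (l := nhdsWithin t (Set.Icc 0 T \ {t}))
      (F := fun s x => slope (fun s' => n s' x ^ 2) t s)
      (f := fun x => 2 * n t x * A t x)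
      (bound := Set.indicator 𝒦 fun _ => C)
      ?_ ?_ ?_ ?_
    · refine key.congr' ?_
      filter_upwards [self_mem_nhdsWithin] with s hs
      obtain ⟨hsI, hst⟩ := hs
      have hst' : s - t ≠ 0 := sub_ne_zero.2 hst
      simp only [slope_def_field]
      rw [integral_div, integral_sub (hint_sq s hsI) (hint_sq t ht)]
    · filter_upwards [self_mem_nhdsWithin] with s hs
      obtain ⟨hsI, _⟩ := hs
      simp only [slope_def_field]
      exact (((((hntc s hsI).continuous).pow 2).sub
        (((hntc t ht).continuous).pow 2)).div_const _).aestronglyMeasurable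
    · filter_upwards [self_mem_nhdsWithin] with s hs
      obtain ⟨hsI, hst⟩ := hs
      refine Filter.Eventually.of_forall (fun x => ?_)
      by_cases hx : x ∈ 𝒦
      · have hmvt := Convex.norm_image_sub_le_of_norm_hasDerivWithin_le
          (f := fun s' => n s' x ^ 2) (f' := fun s' => 2 * n s' x * A s' x)
          (s := Set.Icc (0:ℝ) T) (fun s' hs' => hsqder s' hs' x)
          (fun s' hs' => by rw [Real.norm_eq_abs]; exact hC s' hs' x hx)
          (convex_Icc _ _) ht hsI
        rw [Set.indicator_of_mem hx, slope_def_field, Real.norm_eq_abs, abs_div]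
        rw [Real.norm_eq_abs, Real.norm_eq_abs] at hmvt
        have habs : |s - t| > 0 := abs_pos.2 (sub_ne_zero.2 hst)
        rw [div_le_iff₀ habs]
        exact hmvt
      · rw [Set.indicator_of_notMem hx, slope_def_field,
          hsupp s hsI x hx, hsupp t ht x hx]
        simp
    · rw [integrable_indicator_iff h𝒦.measurableSet]
      exact integrableOn_const h𝒦.measure_lt_top.ne
    · refine Filter.Eventually.of_forall (fun x => ?_)
      exact hasDerivWithinAt_iff_tendsto_slope.mp (hsqder t ht x)
  · -- the inequality
    intro t ht
    have h1t : (0:ℝ) < 1 + t := by linarith [ht.1]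
    have hntd : Differentiable ℝ (n t) := (hntc t ht).differentiable one_ne_zero
    have hwtd : Differentiable ℝ (w t) := (hwtc t ht).differentiable one_ne_zero
    have hvtd : Differentiable ℝ (v t) := (hvtc t ht).differentiable one_ne_zero
    have hFtc : ContDiff ℝ 1 (fun y => w t y + v t y) := (hwtc t ht).add (hvtc t ht)
    have hFtd : Differentiable ℝ (fun y => w t y + v t y) := hFtc.differentiable one_ne_zero
    -- derivative of the square
    have hQfd : ∀ x, HasFDerivAt (fun y => n t y ^ 2)
        ((2 * n t x) • fderiv ℝ (n t) x) x := by
      intro x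
      have h := HasFDerivAt.mul (hntd x).hasFDerivAt (hntd x).hasFDerivAt
      have hf : (fun y => n t y ^ 2) = n t * n t := by funext y; simp only [Pi.mul_apply]; ring
      rw [hf]
      exact h.congr_fderiv (by rw [two_mul, add_smul])
    have hQd : Differentiable ℝ (fun y => n t y ^ 2) := fun x => (hQfd x).differentiableAt
    have hfQ : ∀ x, fderiv ℝ (fun y => n t y ^ 2) x = (2 * n t x) • fderiv ℝ (n t) x :=
      fun x => (hQfd x).fderiv
    have hQc : ContDiff ℝ 1 (fun y => n t y ^ 2) := (hntc t ht).pow 2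
    have hfQcont : Continuous (fun x => fderiv ℝ (fun y => n t y ^ 2) x) :=
      hQc.continuous_fderiv one_ne_zero
    -- vanishing off the compact set
    have hQ0 : ∀ x ∉ 𝒦, n t x ^ 2 = 0 := fun x hx => by rw [hsupp t ht x hx]; ring
    have hfQ0 : ∀ x ∉ 𝒦, fderiv ℝ (fun y => n t y ^ 2) x = 0 := by
      intro x hx
      rw [hfQ x, hsupp t ht x hx]
      simp
    -- coordinate functions
    have hFic : ∀ i : Fin d, ContDiff ℝ 1 (fun y => (w t y + v t y) i) := by
      intro i
      have h := (EuclideanSpace.proj (𝕜 := ℝ) i).contDiff.comp hFtc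
      exact h
    have hfdFi : ∀ (i : Fin d) (x), fderiv ℝ (fun y => (w t y + v t y) i) x
        = (EuclideanSpace.proj i).comp (fderiv ℝ (fun y => w t y + v t y) x) := by
      intro i x
      have h := ((EuclideanSpace.proj (𝕜 := ℝ) i).hasFDerivAt.comp x
        (hFtd x).hasFDerivAt).fderiv
      exact h
    -- divergence splitting
    have hdivsplit : ∀ x, divg (fun y => w t y + v t y) x
        = divg (w t) x + divg (v t) x := by
      intro x
      unfold divg
      rw [← Finset.sum_add_distrib]
      refine Finset.sum_congr rfl fun i _ => ?_
      rw [fderiv_fun_add (hwtd x) (hvtd x)]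
      rfl
    -- continuity of divergences
    have hdivw_cont : Continuous (divg (w t)) := by
      refine continuous_finset_sum _ fun i _ => ?_
      exact (EuclideanSpace.proj i).continuous.comp
        (((hwtc t ht).continuous_fderiv one_ne_zero).clm_apply continuous_const)
    have hdivF_cont : Continuous (divg (fun y => w t y + v t y)) := by
      refine continuous_finset_sum _ fun i _ => ?_
      exact (EuclideanSpace.proj i).continuous.comp
        ((hFtc.continuous_fderiv one_ne_zero).clm_apply continuous_const)
    -- integrability workhorse
    have mkInt : ∀ f : EuclideanSpace ℝ (Fin d) → ℝ, Continuous f →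
        (∀ x ∉ 𝒦, f x = 0) → Integrable f volume := fun f hf h0 =>
      hf.integrable_of_hasCompactSupport (HasCompactSupport.intro h𝒦 h0)
    -- integration by parts in each direction
    have hIBP : ∀ i : Fin d,
        ∫ x, n t x ^ 2 * fderiv ℝ (fun y => (w t y + v t y) i) x (EuclideanSpace.single i 1)
        = - ∫ x, fderiv ℝ (fun y => n t y ^ 2) x (EuclideanSpace.single i 1)
            * (w t x + v t x) i := by
      intro i
      refine integral_mul_fderiv_eq_neg_fderiv_mul_of_integrable ?_ ?_ ?_ (fun x _ => hQd x)
        (fun x _ => (hFic i).differentiable one_ne_zero x)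
      · refine mkInt _ ((hfQcont.clm_apply continuous_const).mul (hFic i).continuous)
          (fun x hx => by rw [hfQ0 x hx]; simp)
      · refine mkInt _ ((hQc.continuous).mul
          (((hFic i).continuous_fderiv one_ne_zero).clm_apply continuous_const))
          (fun x hx => by rw [hQ0 x hx, zero_mul])
      · exact mkInt _ ((hQc.continuous).mul (hFic i).continuous)
          (fun x hx => by rw [hQ0 x hx, zero_mul])
    -- the gradient term integrates to the divergence term
    have hdecomp : ∀ x, fderiv ℝ (fun y => n t y ^ 2) x (w t x + v t x)
        = ∑ i, (w t x + v t x) i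
            * fderiv ℝ (fun y => n t y ^ 2) x (EuclideanSpace.single i 1) := by
      intro x
      conv_lhs => rw [← euclid_sum_single (w t x + v t x)]
      rw [map_sum]
      exact Finset.sum_congr rfl fun i _ => by rw [_root_.map_smul, smul_eq_mul]
    have hdiv_pt : ∀ x, ∑ i, fderiv ℝ (fun y => (w t y + v t y) i) x
          (EuclideanSpace.single i 1)
        = divg (fun y => w t y + v t y) x := by
      intro x
      unfold divg
      exact Finset.sum_congr rfl fun i _ => by rw [hfdFi i x]; rfl
    have hkey : ∫ x, fderiv ℝ (fun y => n t y ^ 2) x (w t x + v t x)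
        = - ∫ x, n t x ^ 2 * divg (fun y => w t y + v t y) x := by
      have h1 : ∫ x, fderiv ℝ (fun y => n t y ^ 2) x (w t x + v t x)
          = ∑ i, ∫ x, (w t x + v t x) i
              * fderiv ℝ (fun y => n t y ^ 2) x (EuclideanSpace.single i 1) := by
        rw [show (fun x => fderiv ℝ (fun y => n t y ^ 2) x (w t x + v t x))
          = fun x => ∑ i, (w t x + v t x) i
              * fderiv ℝ (fun y => n t y ^ 2) x (EuclideanSpace.single i 1)
          from funext hdecomp]
        refine integral_finset_sum _ fun i _ => ?_
        exact mkInt _ (((EuclideanSpace.proj i).continuous.comp hFtc.continuous).mul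
            (hfQcont.clm_apply continuous_const))
          (fun x hx => by rw [hfQ0 x hx]; simp)
      have h2 : ∫ x, n t x ^ 2 * divg (fun y => w t y + v t y) x
          = ∑ i, ∫ x, n t x ^ 2 * fderiv ℝ (fun y => (w t y + v t y) i) x
              (EuclideanSpace.single i 1) := by
        rw [show (fun x => n t x ^ 2 * divg (fun y => w t y + v t y) x)
          = fun x => ∑ i, n t x ^ 2 * fderiv ℝ (fun y => (w t y + v t y) i) x
              (EuclideanSpace.single i 1)
          from funext fun x => by rw [← hdiv_pt x, Finset.mul_sum]]
        refine integral_finset_sum _ fun i _ => ?_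
        exact mkInt _ ((hQc.continuous).mul
            (((hFic i).continuous_fderiv one_ne_zero).clm_apply continuous_const))
          (fun x hx => by rw [hQ0 x hx, zero_mul])
      rw [h1, h2, ← Finset.sum_neg_distrib]
      refine Finset.sum_congr rfl fun i _ => ?_
      rw [show (fun x => (w t x + v t x) i
            * fderiv ℝ (fun y => n t y ^ 2) x (EuclideanSpace.single i 1))
          = fun x => fderiv ℝ (fun y => n t y ^ 2) x (EuclideanSpace.single i 1)
            * (w t x + v t x) i from funext fun x => mul_comm _ _]
      rw [hIBP i, neg_neg]
    -- value of the derivative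
    have hint1 : Integrable (fun x => fderiv ℝ (fun y => n t y ^ 2) x (w t x + v t x)) volume :=
      mkInt _ (hfQcont.clm_apply hFtc.continuous) (fun x hx => by rw [hfQ0 x hx]; simp)
    have hint2 : Integrable (fun x => n t x ^ 2 * divg (fun y => w t y + v t y) x) volume :=
      mkInt _ (hQc.continuous.mul hdivF_cont) (fun x hx => by rw [hQ0 x hx, zero_mul])
    have hpt : ∀ x, 2 * n t x * A t x
        = -(fderiv ℝ (fun y => n t y ^ 2) x (w t x + v t x)
            + 2 * γ' * (n t x ^ 2 * divg (fun y => w t y + v t y) x)) := by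
      intro x
      rw [hA, hfQ x]
      simp only [ContinuousLinearMap.coe_smul', Pi.smul_apply, smul_eq_mul]
      ring
    have hEeq : (∫ x, 2 * n t x * A t x)
        = (1 - 2 * γ') * ∫ x, n t x ^ 2 * divg (fun y => w t y + v t y) x := by
      rw [show (fun x => 2 * n t x * A t x) = fun x =>
          -(fderiv ℝ (fun y => n t y ^ 2) x (w t x + v t x)
            + 2 * γ' * (n t x ^ 2 * divg (fun y => w t y + v t y) x)) from funext hpt]
      rw [integral_neg, integral_add hint1 (hint2.const_mul (2 * γ')),
        integral_const_mul, hkey]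
      ring
    -- splitting the divergence integral
    have hκt_meas : Measurable (fun x => κ t x) := hκmeas.comp measurable_prodMk_left
    have hintQdw : Integrable (fun x => n t x ^ 2 * divg (w t) x) volume :=
      mkInt _ (hQc.continuous.mul hdivw_cont) (fun x hx => by rw [hQ0 x hx, zero_mul])
    have hintQκ : Integrable (fun x => n t x ^ 2 * (κ t x / (1 + t) ^ 2)) volume := by
      refine Integrable.mono' ((hint_sq t ht).mul_const (M / (1 + t) ^ 2)) ?_ ?_
      · exact (hQc.continuous.measurable.mul (hκt_meas.div_const _)).aestronglyMeasurable
      · refine Filter.Eventually.of_forall fun x => ?_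
        rw [Real.norm_eq_abs, abs_mul, abs_of_nonneg (sq_nonneg (n t x))]
        refine mul_le_mul_of_nonneg_left ?_ (sq_nonneg _)
        rw [abs_div, abs_of_nonneg (by positivity : (0:ℝ) ≤ (1 + t) ^ 2)]
        gcongr
        exact hκbdd t x
    have hsplit : (∫ x, n t x ^ 2 * divg (fun y => w t y + v t y) x)
        = (∫ x, n t x ^ 2 * divg (w t) x) + ((d:ℝ) / (1 + t)) * (∫ x, n t x ^ 2)
          + ∫ x, n t x ^ 2 * (κ t x / (1 + t) ^ 2) := by
      have hfadd : Integrable (fun x => n t x ^ 2 * divg (w t) x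
          + ((d:ℝ) / (1 + t)) * n t x ^ 2) volume :=
        hintQdw.add ((hint_sq t ht).const_mul _)
      have e1 : (∫ x, n t x ^ 2 * divg (fun y => w t y + v t y) x)
          = ∫ x, (n t x ^ 2 * divg (w t) x + ((d:ℝ) / (1 + t)) * n t x ^ 2)
              + n t x ^ 2 * (κ t x / (1 + t) ^ 2) := by
        congr 1
        funext x
        rw [hdivsplit x, hdivv t ht x]
        ring
      rw [e1, integral_add hfadd hintQκ,
        integral_add hintQdw ((hint_sq t ht).const_mul _), integral_const_mul]
    -- bounds
    have hWle : ∀ x, |divg (w t) x| ≤ ⨆ x, |divg (w t) x| := fun x =>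
      le_ciSup (hwbdd t ht) x
    have habs1 : |∫ x, n t x ^ 2 * divg (w t) x|
        ≤ (⨆ x, |divg (w t) x|) * ∫ x, n t x ^ 2 := by
      rw [← Real.norm_eq_abs]
      refine (norm_integral_le_integral_norm _).trans ?_
      have hmono : (∫ x, ‖n t x ^ 2 * divg (w t) x‖)
          ≤ ∫ x, n t x ^ 2 * (⨆ x, |divg (w t) x|) := by
        refine integral_mono hintQdw.norm ((hint_sq t ht).mul_const _) fun x => ?_
        rw [Real.norm_eq_abs, abs_mul, abs_of_nonneg (sq_nonneg (n t x))]
        exact mul_le_mul_of_nonneg_left (hWle x) (sq_nonneg _)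
      refine hmono.trans ?_
      rw [integral_mul_const]
      exact le_of_eq (mul_comm _ _)
    have habs2 : |∫ x, n t x ^ 2 * (κ t x / (1 + t) ^ 2)|
        ≤ (M / (1 + t) ^ 2) * ∫ x, n t x ^ 2 := by
      rw [← Real.norm_eq_abs]
      refine (norm_integral_le_integral_norm _).trans ?_
      have hmono : (∫ x, ‖n t x ^ 2 * (κ t x / (1 + t) ^ 2)‖)
          ≤ ∫ x, n t x ^ 2 * (M / (1 + t) ^ 2) := by
        refine integral_mono hintQκ.norm ((hint_sq t ht).mul_const _) fun x => ?_
        rw [Real.norm_eq_abs, abs_mul, abs_of_nonneg (sq_nonneg (n t x))]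
        refine mul_le_mul_of_nonneg_left ?_ (sq_nonneg _)
        rw [abs_div, abs_of_nonneg (by positivity : (0:ℝ) ≤ (1 + t) ^ 2)]
        gcongr
        exact hκbdd t x
      refine hmono.trans ?_
      rw [integral_mul_const]
      exact le_of_eq (mul_comm _ _)
    have hfin : (1/2) * (∫ x, 2 * n t x * A t x)
        + ((d:ℝ) * (γ' - 1/2) / (1 + t)) * ∫ x, n t x ^ 2
        = (1/2 - γ') * ((∫ x, n t x ^ 2 * divg (w t) x)
            + ∫ x, n t x ^ 2 * (κ t x / (1 + t) ^ 2)) := by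
      rw [hEeq, hsplit]
      have h1t' : (1 + t) ≠ 0 := ne_of_gt h1t
      field_simp
      ring
    calc (1/2) * (∫ x, 2 * n t x * A t x)
          + ((d:ℝ) * (γ' - 1/2) / (1 + t)) * ∫ x, n t x ^ 2
        = (1/2 - γ') * ((∫ x, n t x ^ 2 * divg (w t) x)
            + ∫ x, n t x ^ 2 * (κ t x / (1 + t) ^ 2)) := hfin
      _ ≤ |1/2 - γ'| * |(∫ x, n t x ^ 2 * divg (w t) x)
            + ∫ x, n t x ^ 2 * (κ t x / (1 + t) ^ 2)| :=
        (le_abs_self _).trans (le_of_eq (abs_mul _ _))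
      _ ≤ |γ' - 1/2| * (|∫ x, n t x ^ 2 * divg (w t) x|
            + |∫ x, n t x ^ 2 * (κ t x / (1 + t) ^ 2)|) := by
        rw [abs_sub_comm]
        exact mul_le_mul_of_nonneg_left (abs_add_le _ _) (abs_nonneg _)
      _ ≤ |γ' - 1/2| * ((⨆ x, |divg (w t) x|) * (∫ x, n t x ^ 2)
            + (M / (1 + t) ^ 2) * ∫ x, n t x ^ 2) :=
        mul_le_mul_of_nonneg_left (add_le_add habs1 habs2) (abs_nonneg _)
      _ = |γ' - 1/2| * ((⨆ x, |divg (w t) x|) + M / (1 + t) ^ 2)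
            * ∫ x, n t x ^ 2 := by ring
end
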